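/- Let 0 < ℓ < d and let O ⊆ ℝ^d be an open set whose boundary ∂O is ℓ-regular. Then for every t ∈ (0, min{1, d−ℓ}) the set O is of class D^t, i.e. sup over x ∈ ∂O and 0 < r ≤ 1 of r^{t−d} · ∫_{B(x,r) \ ∂O} dist(y, ∂O)^{−t} dy is finite. In particular, if ∂O is (d−1)-regular, then O is of class D^t for every t ∈ (0,1). -/

import Mathlib

open MeasureTheory Metric


private lemma bigball_bound {d : ℕ} {ℓ : ℝ} {F : Set (EuclideanSpace ℝ (Fin d))}
    {b : ℝ} (hb : 0 < b)
    (hup : ∀ w ∈ F, μH[ℓ] (ball w 1 ∩ F) ≤ ENNReal.ofReal b) :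
    ∃ N : ℝ, 0 ≤ N ∧ ∀ x ∈ F, μH[ℓ] (ball x 3 ∩ F) ≤ ENNReal.ofReal N := by
  obtain ⟨T, hTfin, hTcov⟩ := (Metric.totallyBounded_iff).1
    ((isCompact_closedBall (0 : EuclideanSpace ℝ (Fin d)) 3).totallyBounded) (1/2) (by norm_num)
  refine ⟨hTfin.toFinset.card * b, by positivity, fun x hx => ?_⟩
  have hcov : ball x 3 ∩ F ⊆ ⋃ c ∈ hTfin.toFinset, ball (x + c) (1/2) ∩ F := by
    rintro y ⟨hy3, hyF⟩
    have hmem : y - x ∈ closedBall (0 : EuclideanSpace ℝ (Fin d)) 3 := by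
      rw [mem_closedBall, dist_zero_right, ← dist_eq_norm]
      exact (mem_ball.1 hy3).le
    obtain ⟨c, hcT, hc⟩ := Set.mem_iUnion₂.1 (hTcov hmem)
    have hyc : y ∈ ball (x + c) (1/2) := by
      rw [mem_ball, dist_eq_norm, show y - (x + c) = y - x - c by abel, ← dist_eq_norm]
      exact mem_ball.1 hc
    exact Set.mem_biUnion (hTfin.mem_toFinset.2 hcT) ⟨hyc, hyF⟩
  calc μH[ℓ] (ball x 3 ∩ F)
      ≤ ∑ c ∈ hTfin.toFinset, μH[ℓ] (ball (x + c) (1/2) ∩ F) :=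
        (measure_mono hcov).trans (measure_biUnion_finset_le _ _)
    _ ≤ ∑ c ∈ hTfin.toFinset, ENNReal.ofReal b := by
        refine Finset.sum_le_sum fun c _ => ?_
        rcases (ball (x + c) (1/2) ∩ F).eq_empty_or_nonempty with he | ⟨w, hwb, hwF⟩
        · rw [he]; simp
        · refine le_trans (measure_mono ?_) (hup w hwF)
          rintro y ⟨hyb, hyF⟩
          refine ⟨mem_ball.2 ?_, hyF⟩
          have h1 := mem_ball.1 hyb
          have h2 := mem_ball.1 hwb
          have h3 := dist_triangle y (x + c) w
          rw [dist_comm w (x+c)] at h2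
          linarith
    _ = ENNReal.ofReal (hTfin.toFinset.card * b) := by
        rw [Finset.sum_const, nsmul_eq_mul, ← ENNReal.ofReal_natCast hTfin.toFinset.card,
          ← ENNReal.ofReal_mul (by positivity)]


private lemma vol_nbhd_bound {d : ℕ} {ℓ : ℝ}
    {F : Set (EuclideanSpace ℝ (Fin d))} (hFm : MeasurableSet F)
    {a M : ℝ} (ha : 0 < a) (hM : 0 ≤ M)
    (hlow : ∀ z ∈ F, ∀ s : ℝ, 0 < s → s ≤ 1 →
      ENNReal.ofReal (a * s ^ ℓ) ≤ μH[ℓ] (ball z s ∩ F))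
    (hup3 : ∀ x ∈ F, ∀ r : ℝ, 0 < r → r ≤ 1 →
      μH[ℓ] (ball x (3 * r) ∩ F) ≤ ENNReal.ofReal (M * r ^ ℓ))
    {x : EuclideanSpace ℝ (Fin d)} (hx : x ∈ F) {s r : ℝ}
    (hs : 0 < s) (hsr : s ≤ r) (hr1 : r ≤ 1) :
    volume ({y | EMetric.infEdist y F < ENNReal.ofReal s} ∩ ball x r) ≤
      ENNReal.ofReal (M / a * 4 ^ d *
        (volume (ball (0 : EuclideanSpace ℝ (Fin d)) 1)).toReal * r ^ ℓ * s ^ ((d : ℝ) - ℓ)) := by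
  have hr0 : 0 < r := hs.trans_le hsr
  have hsl : (0:ℝ) < a * s ^ ℓ := mul_pos ha (Real.rpow_pos_of_pos hs ℓ)
  obtain ⟨u, huT, hdisj, hcov⟩ :=
    Vitali.exists_disjoint_subfamily_covering_enlargement_closedBall
      (F ∩ closedBall x (r + s)) id (fun _ => s) s (fun _ _ => le_rfl) 4 (by norm_num)
  have hsub3 : ∀ z ∈ F ∩ closedBall x (r + s), ball z s ∩ F ⊆ ball x (3 * r) ∩ F := by
    rintro z ⟨hzF, hzx⟩ y ⟨hy, hyF⟩
    refine ⟨mem_ball.2 ?_, hyF⟩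
    have h1 := mem_closedBall.1 hzx
    have h2 := mem_ball.1 hy
    have h3 := dist_triangle y z x
    linarith
  have hsum : ∀ v : Finset (EuclideanSpace ℝ (Fin d)), ↑v ⊆ u →
      (v.card : ℝ) * (a * s ^ ℓ) ≤ M * r ^ ℓ := by
    intro v hv
    have hmem : ∀ z ∈ v, z ∈ F ∩ closedBall x (r + s) := fun z hz => huT (hv hz)
    have hdisj' : (↑v : Set (EuclideanSpace ℝ (Fin d))).PairwiseDisjoint
        (fun z => ball z s ∩ F) :=
      (hdisj.subset hv).mono fun z =>
        (Set.inter_subset_left).trans ball_subset_closedBall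
    have key : ∑ _z ∈ v, ENNReal.ofReal (a * s ^ ℓ) ≤ ENNReal.ofReal (M * r ^ ℓ) := by
      calc ∑ z ∈ v, ENNReal.ofReal (a * s ^ ℓ)
          ≤ ∑ z ∈ v, μH[ℓ] (ball z s ∩ F) :=
            Finset.sum_le_sum fun z hz => hlow z (hmem z hz).1 s hs (hsr.trans hr1)
        _ = μH[ℓ] (⋃ z ∈ v, ball z s ∩ F) :=
            (measure_biUnion_finset hdisj' fun z _ => measurableSet_ball.inter hFm).symm
        _ ≤ μH[ℓ] (ball x (3 * r) ∩ F) :=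
            measure_mono (Set.iUnion₂_subset fun z hz => hsub3 z (hmem z hz))
        _ ≤ ENNReal.ofReal (M * r ^ ℓ) := hup3 x hx r hr0 hr1
    rw [Finset.sum_const, nsmul_eq_mul, ← ENNReal.ofReal_natCast v.card,
      ← ENNReal.ofReal_mul (by positivity)] at key
    exact (ENNReal.ofReal_le_ofReal_iff (by positivity)).1 key
  have hufin : u.Finite := by
    by_contra hinf
    obtain ⟨n, hn⟩ := exists_nat_gt (M * r ^ ℓ / (a * s ^ ℓ))
    obtain ⟨v, hvu, hvcard⟩ := Set.Infinite.exists_subset_card_eq hinf n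
    have h1 := hsum v hvu
    rw [hvcard] at h1
    rw [div_lt_iff₀ hsl] at hn
    linarith
  have hcard : ((hufin.toFinset.card : ℝ)) * (a * s ^ ℓ) ≤ M * r ^ ℓ :=
    hsum hufin.toFinset (by simp)
  have hcover : {y | EMetric.infEdist y F < ENNReal.ofReal s} ∩ ball x r ⊆
      ⋃ w ∈ hufin.toFinset, closedBall w (4 * s) := by
    rintro y ⟨hy1, hy2⟩
    obtain ⟨z, hzF, hyz⟩ := EMetric.infEdist_lt_iff.1 hy1
    have hyz' : dist y z < s := by rwa [edist_lt_ofReal] at hyz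
    have hzt : z ∈ F ∩ closedBall x (r + s) := by
      refine ⟨hzF, mem_closedBall.2 ?_⟩
      have h1 := dist_triangle z y x
      have h2 := mem_ball.1 hy2
      rw [dist_comm z y] at h1
      linarith
    obtain ⟨w, hwu, hwsub⟩ := hcov z hzt
    exact Set.mem_biUnion (hufin.mem_toFinset.2 hwu)
      (hwsub (mem_closedBall.2 hyz'.le))
  have ha' : a ≠ 0 := ha.ne'
  have hsl' : s ^ ℓ ≠ 0 := (Real.rpow_pos_of_pos hs ℓ).ne'
  set V := volume (ball (0 : EuclideanSpace ℝ (Fin d)) 1) with hV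
  have hVne : V ≠ ⊤ := measure_ball_lt_top.ne
  have hVnn : (0:ℝ) ≤ V.toReal := ENNReal.toReal_nonneg
  calc volume ({y | EMetric.infEdist y F < ENNReal.ofReal s} ∩ ball x r)
      ≤ volume (⋃ w ∈ hufin.toFinset, closedBall w (4 * s)) := measure_mono hcover
    _ ≤ ∑ w ∈ hufin.toFinset, volume (closedBall w (4 * s)) :=
        measure_biUnion_finset_le _ _
    _ = (hufin.toFinset.card : ENNReal) * (ENNReal.ofReal ((4 * s) ^ d) * V) := by
        rw [Finset.sum_congr rfl fun w _ => by
          rw [Measure.addHaar_closedBall _ w (by positivity), finrank_euclideanSpace_fin]]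
        rw [Finset.sum_const, nsmul_eq_mul]
    _ ≤ ENNReal.ofReal (M / a * 4 ^ d * V.toReal * r ^ ℓ * s ^ ((d : ℝ) - ℓ)) := by
        rw [← ENNReal.ofReal_toReal hVne, ← ENNReal.ofReal_natCast hufin.toFinset.card,
          ← ENNReal.ofReal_mul (by positivity), ← ENNReal.ofReal_mul (by positivity),
          ENNReal.toReal_ofReal hVnn]
        apply ENNReal.ofReal_le_ofReal
        have h1 : ((hufin.toFinset.card : ℝ)) ≤ M * r ^ ℓ / (a * s ^ ℓ) :=
          (le_div_iff₀ hsl).2 hcard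
        have h2 : M * r ^ ℓ / (a * s ^ ℓ) * ((4 * s) ^ d * V.toReal) =
            M / a * 4 ^ d * V.toReal * r ^ ℓ * s ^ ((d : ℝ) - ℓ) := by
          rw [Real.rpow_sub hs, mul_pow, ← Real.rpow_natCast s d]
          field_simp
        calc ((hufin.toFinset.card : ℝ)) * ((4 * s) ^ d * V.toReal)
            ≤ M * r ^ ℓ / (a * s ^ ℓ) * ((4 * s) ^ d * V.toReal) :=
              mul_le_mul_of_nonneg_right h1 (by positivity)
          _ = _ := h2

/-- An open set with `ℓ`-regular boundary (`0 < ℓ < d`) belongs to the class `D^t`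
for every `t ∈ (0, min{1, d-ℓ})`. In particular, if the boundary is `(d-1)`-regular,
then `O` is of class `D^t` for every `t ∈ (0,1)`. -/
theorem regular_boundary_implies_Dt (d : ℕ) (ℓ : ℝ) (hℓ0 : 0 < ℓ) (hℓd : ℓ < d)
    (O : Set (EuclideanSpace ℝ (Fin d))) (hO : IsOpen O)
    (a b : ℝ) (ha : 0 < a) (hab : a ≤ b)
    (hreg : ∀ x ∈ frontier O, ∀ r : ℝ, 0 < r → r ≤ 1 →
      ENNReal.ofReal (a * r ^ ℓ) ≤ μH[ℓ] (ball x r ∩ frontier O) ∧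
      μH[ℓ] (ball x r ∩ frontier O) ≤ ENNReal.ofReal (b * r ^ ℓ)) :
    ∀ t : ℝ, 0 < t → t < min 1 ((d : ℝ) - ℓ) →
      ∃ K : ℝ, 0 ≤ K ∧
        ∀ x ∈ frontier O, ∀ r : ℝ, 0 < r → r ≤ 1 →
          ∫⁻ y in ball x r \ frontier O, EMetric.infEdist y (frontier O) ^ (-t) ≤
            ENNReal.ofReal (K * r ^ ((d : ℝ) - t)) := by
  intro t ht0 htmin
  have ht1 : t < 1 := lt_of_lt_of_le htmin (min_le_left _ _)
  have htσ : t < (d : ℝ) - ℓ := lt_of_lt_of_le htmin (min_le_right _ _)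
  set F := frontier O with hF
  have hFc : IsClosed F := isClosed_frontier
  have hFm : MeasurableSet F := hFc.measurableSet
  have hb : 0 < b := lt_of_lt_of_le ha hab
  have hlow : ∀ z ∈ F, ∀ s : ℝ, 0 < s → s ≤ 1 →
      ENNReal.ofReal (a * s ^ ℓ) ≤ μH[ℓ] (ball z s ∩ F) :=
    fun z hz s h1 h2 => (hreg z hz s h1 h2).1
  have hup1 : ∀ w ∈ F, μH[ℓ] (ball w 1 ∩ F) ≤ ENNReal.ofReal b := by
    intro w hw
    have h := (hreg w hw 1 one_pos le_rfl).2
    rwa [Real.one_rpow, mul_one] at h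
  obtain ⟨N, hN0, hN⟩ := bigball_bound hb hup1
  set M := (N + b) * 3 ^ ℓ with hMdef
  have h3l : (0:ℝ) < 3 ^ ℓ := Real.rpow_pos_of_pos (by norm_num) ℓ
  have hM0 : 0 ≤ M := by positivity
  have hup3 : ∀ x ∈ F, ∀ r : ℝ, 0 < r → r ≤ 1 →
      μH[ℓ] (ball x (3 * r) ∩ F) ≤ ENNReal.ofReal (M * r ^ ℓ) := by
    intro x hx r hr0 hr1
    have hrl : (0:ℝ) < r ^ ℓ := Real.rpow_pos_of_pos hr0 ℓ
    have hmul : ((3:ℝ) * r) ^ ℓ = 3 ^ ℓ * r ^ ℓ := Real.mul_rpow (by norm_num) hr0.le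
    rcases le_or_gt (3 * r) 1 with h3 | h3
    · refine le_trans (hreg x hx (3 * r) (by linarith) h3).2 (ENNReal.ofReal_le_ofReal ?_)
      rw [hmul, hMdef]
      nlinarith [mul_nonneg (mul_nonneg hN0 h3l.le) hrl.le]
    · have hsub : ball x (3 * r) ∩ F ⊆ ball x 3 ∩ F :=
        Set.inter_subset_inter_left _ (ball_subset_ball (by linarith))
      refine le_trans (measure_mono hsub) ((hN x hx).trans (ENNReal.ofReal_le_ofReal ?_))
      have h1 : (1:ℝ) ≤ (3 * r) ^ ℓ := by
        calc (1:ℝ) = (1:ℝ) ^ ℓ := (Real.one_rpow ℓ).symm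
          _ ≤ (3 * r) ^ ℓ := Real.rpow_le_rpow (by norm_num) h3.le hℓ0.le
      rw [hmul] at h1
      rw [hMdef]
      nlinarith [mul_le_mul_of_nonneg_left h1 hN0, mul_nonneg hb.le (mul_nonneg h3l.le hrl.le)]
  set V := (volume (ball (0 : EuclideanSpace ℝ (Fin d)) 1)).toReal with hVdef
  have hV0 : (0:ℝ) ≤ V := ENNReal.toReal_nonneg
  set C1 := M / a * 4 ^ d * V with hC1
  have hC10 : 0 ≤ C1 := by positivity
  set q := (1/2 : ℝ) ^ (((d:ℝ) - ℓ) - t) with hqdef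
  have hq0 : 0 < q := Real.rpow_pos_of_pos (by norm_num) _
  have hq1 : q < 1 := Real.rpow_lt_one (by norm_num) (by norm_num) (by linarith)
  refine ⟨C1 * 2 * (1 - q)⁻¹,
    mul_nonneg (mul_nonneg hC10 (by norm_num)) (inv_nonneg.2 (by linarith)), ?_⟩
  intro x hx r hr0 hr1
  have hhalf : ∀ m : ℕ, (0:ℝ) < (1/2:ℝ)^m := fun m => pow_pos (by norm_num) m
  have hcpos : ∀ m : ℕ, (0:ℝ) < (1/2:ℝ)^m * r := fun m => mul_pos (hhalf m) hr0
  have hcler : ∀ m : ℕ, (1/2:ℝ)^m * r ≤ r := fun m =>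
    mul_le_of_le_one_left hr0.le (pow_le_one₀ (by norm_num) (by norm_num))
  -- the annuli
  set S : ℕ → Set (EuclideanSpace ℝ (Fin d)) := fun k =>
    (fun y => EMetric.infEdist y F) ⁻¹'
      Set.Ico (ENNReal.ofReal ((1/2:ℝ)^(k+1) * r)) (ENNReal.ofReal ((1/2:ℝ)^k * r)) ∩
      ball x r with hS
  have hsubS : ball x r \ F ⊆ ⋃ k, S k := by
    rintro y ⟨hyb, hyF⟩
    have hpos : 0 < EMetric.infEdist y F := by
      show 0 < Metric.infEDist y F
      rw [EMetric.infEdist_pos_iff_notMem_closure, hFc.closure_eq]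
      exact hyF
    have hlt : EMetric.infEdist y F < ENNReal.ofReal r := by
      refine lt_of_le_of_lt (EMetric.infEdist_le_edist_of_mem hx) ?_
      rw [edist_lt_ofReal]
      exact mem_ball.1 hyb
    have hne : EMetric.infEdist y F ≠ ⊤ := hlt.trans_le le_top |>.ne
    set vR := (EMetric.infEdist y F).toReal with hvR
    have hv0 : 0 < vR := ENNReal.toReal_pos hpos.ne' hne
    have hvr : vR < r := (ENNReal.lt_ofReal_iff_toReal_lt hne).1 hlt
    have hex : ∃ n : ℕ, (1/2:ℝ)^n * r ≤ vR := by
      obtain ⟨n, hn⟩ := exists_pow_lt_of_lt_one (div_pos hv0 hr0) (by norm_num : (1/2:ℝ) < 1)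
      exact ⟨n, ((lt_div_iff₀ hr0).1 hn).le⟩
    have hk0 := Nat.find_spec hex
    have hk0ne : Nat.find hex ≠ 0 := by
      intro h
      rw [h] at hk0
      simp only [pow_zero, one_mul] at hk0
      linarith
    obtain ⟨k, hkk⟩ : ∃ k, Nat.find hex = k + 1 :=
      ⟨Nat.find hex - 1, (Nat.succ_pred_eq_of_pos (Nat.pos_of_ne_zero hk0ne)).symm⟩
    have hklt : vR < (1/2:ℝ)^k * r := by
      have := Nat.find_min hex (m := k) (by omega)
      linarith [lt_of_not_ge this]
    rw [hkk] at hk0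
    refine Set.mem_iUnion.2 ⟨k, ⟨?_, hyb⟩⟩
    have hrepr : EMetric.infEdist y F = ENNReal.ofReal vR := (ENNReal.ofReal_toReal hne).symm
    constructor
    · show ENNReal.ofReal ((1/2:ℝ)^(k+1) * r) ≤ EMetric.infEdist y F
      rw [hrepr]
      exact ENNReal.ofReal_le_ofReal hk0
    · show EMetric.infEdist y F < ENNReal.ofReal ((1/2:ℝ)^k * r)
      rw [hrepr]
      exact (ENNReal.ofReal_lt_ofReal_iff (hcpos k)).2 hklt
  have hkeyineq : ∀ k : ℕ, ((1/2:ℝ)^(k+1) * r) ^ (-t) * (C1 * r ^ ℓ * ((1/2:ℝ)^k * r) ^ ((d:ℝ) - ℓ)) ≤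
      C1 * 2 * r ^ ((d:ℝ) - t) * q ^ k := by
    intro k
    have e1 : ((1/2:ℝ)^(k+1) * r) ^ (-t) = ((1/2:ℝ)^k) ^ (-t) * (2:ℝ) ^ t * r ^ (-t) := by
      have h2t : ((1/2:ℝ)) ^ (-t) = (2:ℝ) ^ t := by
        rw [one_div, Real.inv_rpow (by norm_num : (0:ℝ) ≤ 2),
          Real.rpow_neg (by norm_num : (0:ℝ) ≤ 2), inv_inv]
      calc ((1/2:ℝ)^(k+1) * r) ^ (-t) = ((1/2:ℝ)^(k+1)) ^ (-t) * r ^ (-t) :=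
            Real.mul_rpow (hhalf _).le hr0.le
        _ = ((1/2:ℝ)^k) ^ (-t) * ((1/2:ℝ)) ^ (-t) * r ^ (-t) := by
            rw [pow_succ, Real.mul_rpow (hhalf k).le (by norm_num)]
        _ = _ := by rw [h2t]
    have e2 : ((1/2:ℝ)^k * r) ^ ((d:ℝ) - ℓ) =
        ((1/2:ℝ)^k) ^ ((d:ℝ) - ℓ) * r ^ ((d:ℝ) - ℓ) :=
      Real.mul_rpow (hhalf k).le hr0.le
    have e3 : ((1/2:ℝ)^k) ^ (-t) * ((1/2:ℝ)^k) ^ ((d:ℝ) - ℓ) = q ^ k := by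
      rw [← Real.rpow_add (hhalf k)]
      have he : -t + ((d:ℝ) - ℓ) = ((d:ℝ) - ℓ) - t := by ring
      rw [he, ← Real.rpow_natCast (1/2:ℝ) k,
        ← Real.rpow_mul (by norm_num : (0:ℝ) ≤ 1/2),
        mul_comm ((k:ℝ)) _, Real.rpow_mul (by norm_num : (0:ℝ) ≤ 1/2),
        Real.rpow_natCast, hqdef]
    have e4 : r ^ (-t) * (r ^ ℓ * r ^ ((d:ℝ) - ℓ)) = r ^ ((d:ℝ) - t) := by
      rw [← Real.rpow_add hr0, ← Real.rpow_add hr0]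
      congr 1
      ring
    have h2t2 : (2:ℝ) ^ t ≤ 2 := by
      calc (2:ℝ) ^ t ≤ (2:ℝ) ^ (1:ℝ) := Real.rpow_le_rpow_of_exponent_le one_le_two ht1.le
        _ = 2 := Real.rpow_one 2
    calc ((1/2:ℝ)^(k+1) * r) ^ (-t) * (C1 * r ^ ℓ * ((1/2:ℝ)^k * r) ^ ((d:ℝ) - ℓ))
        = (C1 * q ^ k * r ^ ((d:ℝ) - t)) * (2:ℝ) ^ t := by
          rw [e1, e2, ← e3, ← e4]; ring
      _ ≤ (C1 * q ^ k * r ^ ((d:ℝ) - t)) * 2 :=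
          mul_le_mul_of_nonneg_left h2t2
            (mul_nonneg (mul_nonneg hC10 (pow_nonneg hq0.le k)) (Real.rpow_nonneg hr0.le _))
      _ = C1 * 2 * r ^ ((d:ℝ) - t) * q ^ k := by ring
  have hSk : ∀ k : ℕ, ∫⁻ y in S k, EMetric.infEdist y F ^ (-t) ≤
      ENNReal.ofReal (C1 * 2 * r ^ ((d:ℝ) - t)) * (ENNReal.ofReal q) ^ k := by
    intro k
    have hc1pos : (0:ℝ) < (1/2:ℝ)^(k+1) * r := hcpos (k+1)
    have hpt : ∀ y ∈ S k, EMetric.infEdist y F ^ (-t) ≤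
        ENNReal.ofReal (((1/2:ℝ)^(k+1) * r) ^ (-t)) := by
      intro y hy
      have h1 : ENNReal.ofReal ((1/2:ℝ)^(k+1) * r) ≤ EMetric.infEdist y F := hy.1.1
      rw [← ENNReal.ofReal_rpow_of_pos hc1pos, ENNReal.rpow_neg, ENNReal.rpow_neg]
      exact ENNReal.inv_le_inv' (ENNReal.rpow_le_rpow h1 ht0.le)
    have hSsub : S k ⊆ {y | EMetric.infEdist y F < ENNReal.ofReal ((1/2:ℝ)^k * r)} ∩ ball x r :=
      fun y hy => ⟨hy.1.2, hy.2⟩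
    have hvol : volume (S k) ≤ ENNReal.ofReal (C1 * r ^ ℓ * ((1/2:ℝ)^k * r) ^ ((d:ℝ) - ℓ)) := by
      refine (measure_mono hSsub).trans ?_
      have h := vol_nbhd_bound hFm ha hM0 hlow hup3 hx (hcpos k) (hcler k) hr1
      rwa [← hVdef, ← hC1] at h
    calc ∫⁻ y in S k, EMetric.infEdist y F ^ (-t)
        ≤ ∫⁻ _ in S k, ENNReal.ofReal (((1/2:ℝ)^(k+1) * r) ^ (-t)) :=
          setLIntegral_mono measurable_const hpt
      _ = ENNReal.ofReal (((1/2:ℝ)^(k+1) * r) ^ (-t)) * volume (S k) :=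
          setLIntegral_const _ _
      _ ≤ ENNReal.ofReal (((1/2:ℝ)^(k+1) * r) ^ (-t)) *
          ENNReal.ofReal (C1 * r ^ ℓ * ((1/2:ℝ)^k * r) ^ ((d:ℝ) - ℓ)) :=
          by gcongr
      _ = ENNReal.ofReal (((1/2:ℝ)^(k+1) * r) ^ (-t) *
          (C1 * r ^ ℓ * ((1/2:ℝ)^k * r) ^ ((d:ℝ) - ℓ))) :=
          (ENNReal.ofReal_mul (Real.rpow_nonneg hc1pos.le _)).symm
      _ ≤ ENNReal.ofReal (C1 * 2 * r ^ ((d:ℝ) - t) * q ^ k) :=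
          ENNReal.ofReal_le_ofReal (hkeyineq k)
      _ = ENNReal.ofReal (C1 * 2 * r ^ ((d:ℝ) - t)) * (ENNReal.ofReal q) ^ k := by
          rw [ENNReal.ofReal_mul (mul_nonneg (mul_nonneg hC10 (by norm_num))
            (Real.rpow_nonneg hr0.le _)), ENNReal.ofReal_pow hq0.le]
  have hq1' : ENNReal.ofReal q < 1 := by
    rw [← ENNReal.ofReal_one]
    exact (ENNReal.ofReal_lt_ofReal_iff one_pos).2 hq1
  calc ∫⁻ y in ball x r \ F, EMetric.infEdist y F ^ (-t)
      ≤ ∫⁻ y in ⋃ k, S k, EMetric.infEdist y F ^ (-t) :=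
        lintegral_mono' (Measure.restrict_mono hsubS le_rfl) le_rfl
    _ ≤ ∑' k, ∫⁻ y in S k, EMetric.infEdist y F ^ (-t) := lintegral_iUnion_le _ _
    _ ≤ ∑' k : ℕ, ENNReal.ofReal (C1 * 2 * r ^ ((d:ℝ) - t)) * (ENNReal.ofReal q) ^ k :=
        ENNReal.tsum_le_tsum hSk
    _ = ENNReal.ofReal (C1 * 2 * r ^ ((d:ℝ) - t)) * (1 - ENNReal.ofReal q)⁻¹ := by
        rw [ENNReal.tsum_mul_left, ENNReal.tsum_geometric]
    _ = ENNReal.ofReal (C1 * 2 * (1 - q)⁻¹ * r ^ ((d:ℝ) - t)) := by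
        rw [← ENNReal.ofReal_one, ← ENNReal.ofReal_sub 1 hq0.le,
          ← ENNReal.ofReal_inv_of_pos (by linarith),
          ← ENNReal.ofReal_mul (mul_nonneg (mul_nonneg hC10 (by norm_num))
            (Real.rpow_nonneg hr0.le _))]
        congr 1
        ring
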